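/- Let μ > 0, 0 < γ ≤ 1 and t > 0, and let u : ℝ² → ℂ be continuously differentiable with compact support. For ξ = (ξ₁, ξ₂) ∈ ℝ² set |ξ^γ| = sqrt(ξ₁² + γ²ξ₂²) and define ω(ξ) = sqrt(|ξ^γ| · tanh(√μ · |ξ^γ|) / √μ). Then the oscillatory integral ∫_{ℝ²} exp(i (t/ε) ω(ξ)) · u(ξ) dξ tends to 0 as ε tends to 0 from above. -/

import Mathlib

open MeasureTheory Filter Set Real

/-- Derivative of the real hyperbolic tangent. -/
lemma my_hasDerivAt_tanh (x : ℝ) :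
    HasDerivAt Real.tanh (1 / Real.cosh x ^ 2) x := by
  have h := (Real.hasDerivAt_sinh x).div (Real.hasDerivAt_cosh x) (Real.cosh_pos x).ne'
  have heq : (Real.cosh x * Real.cosh x - Real.sinh x * Real.sinh x) / Real.cosh x ^ 2
      = 1 / Real.cosh x ^ 2 := by
    rw [show Real.cosh x * Real.cosh x - Real.sinh x * Real.sinh x
        = Real.cosh x ^ 2 - Real.sinh x ^ 2 by ring, Real.cosh_sq_sub_sinh_sq]
  rw [heq] at h
  exact h.congr_of_eventuallyEq
    (Filter.Eventually.of_forall fun y => Real.tanh_eq_sinh_div_cosh y)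

lemma my_tanh_pos {x : ℝ} (hx : 0 < x) : 0 < Real.tanh x := by
  rw [Real.tanh_eq_sinh_div_cosh]
  exact div_pos (Real.sinh_pos_iff.mpr hx) (Real.cosh_pos x)

/-- 1D Riemann-Lebesgue with an increasing phase. -/
lemma rl_phase
    (g g' : ℝ → ℝ)
    (hg : ∀ r ∈ Ioi (0:ℝ), HasDerivAt g (g' r) r)
    (hg' : ∀ r ∈ Ioi (0:ℝ), 0 < g' r)
    (hginj : InjOn g (Ioi 0))
    (v : ℝ → ℂ) (hv : IntegrableOn v (Ioi 0)) :
    Tendsto (fun lam : ℝ => ∫ r in Ioi (0:ℝ),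
        Complex.exp (Complex.I * ((lam * g r : ℝ) : ℂ)) * v r) atTop (nhds 0) := by
  have hs : MeasurableSet (Ioi (0:ℝ)) := measurableSet_Ioi
  have hgW : ∀ r ∈ Ioi (0:ℝ), HasDerivWithinAt g (g' r) (Ioi 0) r :=
    fun r hr => (hg r hr).hasDerivWithinAt
  have hgcont : ContinuousOn g (Ioi 0) :=
    fun r hr => ((hg r hr).continuousAt).continuousWithinAt
  have himg : MeasurableSet (g '' Ioi 0) :=
    hs.image_of_continuousOn_injOn hgcont hginj
  set ρ : ℝ → ℝ := Function.invFunOn g (Ioi 0) with hρ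
  set w : ℝ → ℂ := fun x => (|g' (ρ x)|)⁻¹ • v (ρ x) with hw
  have hkey : ∀ r ∈ Ioi (0:ℝ), |g' r| • w (g r) = v r := by
    intro r hr
    have hρr : ρ (g r) = r := hginj.leftInvOn_invFunOn hr
    have hne : |g' r| ≠ 0 := ne_of_gt (abs_pos.mpr (ne_of_gt (hg' r hr)))
    rw [hw]; simp only [hρr]
    rw [smul_smul, mul_inv_cancel₀ hne, one_smul]
  have hWint : IntegrableOn w (g '' Ioi 0) := by
    rw [integrableOn_image_iff_integrableOn_abs_deriv_smul hs hgW hginj]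
    exact hv.congr_fun (fun r hr => (hkey r hr).symm) hs
  set W : ℝ → ℂ := (g '' Ioi 0).indicator w with hWdef
  have hWInt : Integrable W := (integrable_indicator_iff himg).mpr hWint
  have heq : ∀ lam : ℝ, (∫ r in Ioi (0:ℝ),
      Complex.exp (Complex.I * ((lam * g r : ℝ) : ℂ)) * v r)
      = ∫ x, Complex.exp (Complex.I * ((lam * x : ℝ) : ℂ)) * W x := by
    intro lam
    have hind : (fun x => Complex.exp (Complex.I * ((lam * x : ℝ) : ℂ)) * W x)
        = (g '' Ioi 0).indicator
          (fun x => Complex.exp (Complex.I * ((lam * x : ℝ) : ℂ)) * w x) := by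
      ext x
      rw [hWdef, Set.indicator_mul_right]
    rw [hind, integral_indicator himg,
      integral_image_eq_integral_abs_deriv_smul hs hgW hginj]
    refine setIntegral_congr_fun hs fun r hr => ?_
    rw [← hkey r hr, Complex.real_smul, Complex.real_smul]
    ring
  -- Riemann-Lebesgue
  have hφ : Tendsto (fun lam : ℝ => -(lam / (2 * π))) atTop (cocompact ℝ) := by
    have h1 : Tendsto (fun lam : ℝ => lam / (2 * π)) atTop atTop :=
      tendsto_id.atTop_div_const (by positivity)
    exact (tendsto_neg_atTop_atBot.comp h1).mono_right _root_.atBot_le_cocompact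
  have RL := (Real.tendsto_integral_exp_smul_cocompact W).comp hφ
  have : (fun lam : ℝ => ∫ x : ℝ, Real.fourierChar (-(x * (-(lam / (2 * π))))) • W x)
      = fun lam : ℝ => ∫ x, Complex.exp (Complex.I * ((lam * x : ℝ) : ℂ)) * W x := by
    funext lam
    congr 1
    funext x
    rw [Circle.smul_def, Real.fourierChar_apply]
    congr 1
    have hπ : (2 * π) ≠ 0 := by positivity
    rw [show 2 * π * -(x * -(lam / (2 * π))) = lam * x by field_simp]
    push_cast
    ring
  simp only [Function.comp_def] at RL
  rw [this] at RL
  refine RL.congr fun lam => (heq lam).symm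

set_option maxHeartbeats 2000000 in
/-- Non-stationary phase for the water-waves dispersion relation in
dimension `d = 2`: the oscillatory integral tends to `0` as `ε → 0⁺`. -/
theorem oscillatory_integral_tendsto_zero_dim2
    (μ γ t : ℝ) (hμ : 0 < μ) (hγ : 0 < γ) (hγ1 : γ ≤ 1) (ht : 0 < t)
    (u : ℝ × ℝ → ℂ) (hu : ContDiff ℝ 1 u) (husupp : HasCompactSupport u)
    (nγ ω : ℝ × ℝ → ℝ)
    (hnγ : ∀ ξ : ℝ × ℝ, nγ ξ = Real.sqrt (ξ.1 ^ 2 + γ ^ 2 * ξ.2 ^ 2))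
    (hω : ∀ ξ : ℝ × ℝ,
      ω ξ = Real.sqrt (nγ ξ * Real.tanh (Real.sqrt μ * nγ ξ) / Real.sqrt μ)) :
    Tendsto
      (fun ε : ℝ => ∫ ξ : ℝ × ℝ,
        Complex.exp (Complex.I * (((t / ε) * ω ξ : ℝ) : ℂ)) * u ξ)
      (nhdsWithin 0 (Set.Ioi 0)) (nhds 0) := by
  set c : ℝ := Real.sqrt μ with hc
  have hcpos : 0 < c := Real.sqrt_pos.mpr hμ
  set g : ℝ → ℝ := fun r => Real.sqrt (r * Real.tanh (c * r) / c) with hgdef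
  set g' : ℝ → ℝ := fun r =>
    ((Real.tanh (c * r) + r * (1 / Real.cosh (c * r) ^ 2 * c)) / c)
      / (2 * Real.sqrt (r * Real.tanh (c * r) / c)) with hg'def
  -- positivity of the inner function h
  have hhpos : ∀ r ∈ Ioi (0:ℝ), 0 < r * Real.tanh (c * r) / c := by
    intro r hr
    exact div_pos (mul_pos hr (my_tanh_pos (mul_pos hcpos hr))) hcpos
  -- derivative of g
  have hgderiv : ∀ r ∈ Ioi (0:ℝ), HasDerivAt g (g' r) r := by
    intro r hr
    have hinner : HasDerivAt (fun r : ℝ => r * Real.tanh (c * r) / c)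
        ((1 * Real.tanh (c * r) + r * (1 / Real.cosh (c * r) ^ 2 * c)) / c) r := by
      have htanh : HasDerivAt (fun r : ℝ => Real.tanh (c * r))
          (1 / Real.cosh (c * r) ^ 2 * c) r := by
        have hlin : HasDerivAt (fun y : ℝ => c * y) c r := by
          simpa using (hasDerivAt_id r).const_mul c
        exact (my_hasDerivAt_tanh (c * r)).comp r hlin
      exact ((hasDerivAt_id r).mul htanh).div_const c
    have := hinner.sqrt (ne_of_gt (hhpos r hr))
    rw [hg'def]
    convert this using 1
    simp [one_mul]
  have hg'pos : ∀ r ∈ Ioi (0:ℝ), 0 < g' r := by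
    intro r hr
    have h1 : 0 < Real.tanh (c * r) := my_tanh_pos (mul_pos hcpos hr)
    have hr0 : (0:ℝ) < r := hr
    have h2 : 0 ≤ r * (1 / Real.cosh (c * r) ^ 2 * c) := by positivity
    exact div_pos (div_pos (by linarith) hcpos)
      (mul_pos two_pos (Real.sqrt_pos.mpr (hhpos r hr)))
  have hginj : InjOn g (Ioi 0) := by
    have hmono : StrictMonoOn g (Ioi 0) := by
      refine strictMonoOn_of_deriv_pos (convex_Ioi 0)
        (fun r hr => ((hgderiv r hr).continuousAt).continuousWithinAt) ?_
      intro r hr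
      rw [interior_Ioi] at hr
      rw [(hgderiv r hr).deriv]
      exact hg'pos r hr
    exact hmono.injOn
  -- continuity facts
  have hnγcont : Continuous nγ := by
    have : nγ = fun ξ : ℝ × ℝ => Real.sqrt (ξ.1 ^ 2 + γ ^ 2 * ξ.2 ^ 2) := funext hnγ
    rw [this]
    exact Real.continuous_sqrt.comp (by fun_prop)
  have htanhcont : Continuous Real.tanh := by
    have : Real.tanh = fun x => Real.sinh x / Real.cosh x :=
      funext Real.tanh_eq_sinh_div_cosh
    rw [this]
    exact Real.continuous_sinh.div Real.continuous_cosh fun x => (Real.cosh_pos x).ne'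
  have hωcont : Continuous ω := by
    have : ω = fun ξ => Real.sqrt (nγ ξ * Real.tanh (c * nγ ξ) / c) := funext hω
    rw [this]
    exact Real.continuous_sqrt.comp
      ((hnγcont.mul (htanhcont.comp (continuous_const.mul hnγcont))).div_const c)
  have hgcont : Continuous g := by
    rw [hgdef]
    exact Real.continuous_sqrt.comp
      (((continuous_id.mul (htanhcont.comp (continuous_const.mul continuous_id)))).div_const c)
  have hucont : Continuous u := hu.continuous
  -- bookkeeping about measures and polar coordinates
  have htargetmeas : MeasurableSet polarCoord.target :=
    polarCoord.open_target.measurableSet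
  have hres : (volume : Measure (ℝ × ℝ)).restrict (Ioi (0:ℝ) ×ˢ Ioo (-π) π)
      = (volume.restrict (Ioi (0:ℝ))).prod (volume.restrict (Ioo (-π) π)) := by
    rw [Measure.prod_restrict, ← Measure.volume_eq_prod]
  have htarget : polarCoord.target = Ioi (0:ℝ) ×ˢ Ioo (-π) π := rfl
  have hsymm : ∀ p : ℝ × ℝ, polarCoord.symm p = (p.1 * Real.cos p.2, p.1 * Real.sin p.2) :=
    fun p => rfl
  -- the scaling homeomorphism
  set e : ℝ × ℝ ≃ₜ ℝ × ℝ :=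
    (Homeomorph.refl ℝ).prodCongr (Homeomorph.mulRight₀ γ⁻¹ (inv_ne_zero hγ.ne')) with hedef
  have happ : ∀ x : ℝ × ℝ, e x = (x.1, x.2 * γ⁻¹) := fun x => rfl
  -- the rescaled profile
  set u' : ℝ × ℝ → ℂ := fun x => u (x.1, x.2 / γ) with hu'def
  have hu'e : u' = u ∘ e := by
    funext x
    simp [hu'def, happ x, div_eq_mul_inv]
  have hu'cont : Continuous u' := by rw [hu'e]; exact hucont.comp e.continuous
  have hu'supp : HasCompactSupport u' := by rw [hu'e]; exact husupp.comp_homeomorph e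
  -- the integrand without phase
  set f₀ : ℝ × ℝ → ℂ := fun p => p.1 • u' (polarCoord.symm p) with hf₀def
  -- integrability of f₀ on the polar target
  have hf₀int : IntegrableOn f₀ polarCoord.target := by
    have hf₀cont : Continuous f₀ := by
      have hsc : Continuous (fun p : ℝ × ℝ => polarCoord.symm p) := by
        have hfun : (fun p : ℝ × ℝ => polarCoord.symm p)
            = fun p : ℝ × ℝ => (p.1 * Real.cos p.2, p.1 * Real.sin p.2) := funext hsymm
        rw [hfun]; fun_prop
      rw [hf₀def]
      exact continuous_fst.smul (hu'cont.comp hsc)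
    obtain ⟨R₀, hR₀⟩ := hu'supp.isBounded.subset_closedBall 0
    set R : ℝ := max R₀ 0 with hRdef
    have hRsub : tsupport u' ⊆ Metric.closedBall 0 R :=
      hR₀.trans (Metric.closedBall_subset_closedBall (le_max_left _ _))
    have hR0 : 0 ≤ R := le_max_right _ _
    obtain ⟨C, hC⟩ := hu'supp.exists_bound_of_continuous hu'cont
    have hC0 : 0 ≤ C := le_trans (norm_nonneg _) (hC 0)
    set B : Set (ℝ × ℝ) := Icc (-(2*R)) (2*R) ×ˢ Icc (-π) π with hBdef
    have hBmeas : MeasurableSet B := measurableSet_Icc.prod measurableSet_Icc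
    have hbound : ∀ p ∈ polarCoord.target,
        ‖f₀ p‖ ≤ B.indicator (fun _ => 2 * R * C) p := by
      intro p hp
      rw [htarget] at hp
      obtain ⟨hp1, hp2⟩ := hp
      have hp1' : (0:ℝ) < p.1 := hp1
      by_cases hz : u' (polarCoord.symm p) = 0
      · rw [hf₀def]
        simp only [hz, smul_zero, norm_zero]
        exact Set.indicator_nonneg (fun _ _ => by positivity) p
      · have hmem : polarCoord.symm p ∈ tsupport u' := subset_tsupport _ hz
        have hball := hRsub hmem
        rw [Metric.mem_closedBall, dist_zero_right] at hball
        have h1 : |p.1 * Real.cos p.2| ≤ R := by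
          have h := (norm_fst_le (polarCoord.symm p)).trans hball
          rw [hsymm p] at h
          simp only [Real.norm_eq_abs] at h
          exact h
        have h2 : |p.1 * Real.sin p.2| ≤ R := by
          have h := (norm_snd_le (polarCoord.symm p)).trans hball
          rw [hsymm p] at h
          simp only [Real.norm_eq_abs] at h
          exact h
        have e1 : (p.1 * Real.cos p.2) ^ 2 ≤ R ^ 2 := by
          rw [← sq_abs]; exact pow_le_pow_left₀ (abs_nonneg _) h1 2
        have e2 : (p.1 * Real.sin p.2) ^ 2 ≤ R ^ 2 := by
          rw [← sq_abs]; exact pow_le_pow_left₀ (abs_nonneg _) h2 2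
        have esum : p.1 ^ 2 ≤ 2 * R ^ 2 := by
          nlinarith [Real.sin_sq_add_cos_sq p.2]
        have hple : p.1 ≤ 2 * R := by nlinarith
        have hmemB : p ∈ B := by
          refine ⟨⟨by linarith, hple⟩, ⟨hp2.1.le, hp2.2.le⟩⟩
        rw [Set.indicator_of_mem hmemB, hf₀def]
        simp only
        rw [norm_smul, Real.norm_eq_abs, abs_of_pos hp1']
        exact mul_le_mul hple (hC _) (norm_nonneg _) (by positivity)
    have hBint : Integrable (B.indicator (fun _ => 2 * R * C) : ℝ × ℝ → ℝ) := by
      rw [integrable_indicator_iff hBmeas]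
      exact integrableOn_const (isCompact_Icc.prod isCompact_Icc).measure_lt_top.ne
    refine Integrable.mono' (hBint.restrict) (hf₀cont.aestronglyMeasurable) ?_
    exact (ae_restrict_iff' htargetmeas).mpr (Eventually.of_forall hbound)
  have hf₀prod : Integrable f₀
      ((volume.restrict (Ioi (0:ℝ))).prod (volume.restrict (Ioo (-π) π))) := by
    have := hf₀int
    rw [IntegrableOn, htarget, hres] at this
    exact this
  -- the angular average
  set v : ℝ → ℂ := fun r => ∫ θ in Ioo (-π) π, f₀ (r, θ) with hvdef
  have hvint : IntegrableOn v (Ioi 0) := hf₀prod.integral_prod_left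
  -- main chain of equalities
  have main : ∀ lam : ℝ,
      (∫ ξ : ℝ × ℝ, Complex.exp (Complex.I * ((lam * ω ξ : ℝ) : ℂ)) * u ξ)
        = (γ⁻¹ : ℝ) • ∫ r in Ioi (0:ℝ),
            Complex.exp (Complex.I * ((lam * g r : ℝ) : ℂ)) * v r := by
    intro lam
    set F : ℝ × ℝ → ℂ :=
      fun ξ => Complex.exp (Complex.I * ((lam * ω ξ : ℝ) : ℂ)) * u ξ with hFdef
    have hFcont : Continuous F := by
      apply Continuous.mul ?_ hucont
      exact Complex.continuous_exp.comp (continuous_const.mul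
        (Complex.continuous_ofReal.comp (continuous_const.mul hωcont)))
    have hFsupp : HasCompactSupport F := husupp.mul_left
    have hFint : Integrable F := hFcont.integrable_of_hasCompactSupport hFsupp
    set G : ℝ × ℝ → ℂ := fun x => F (x.1, x.2 / γ) with hGdef
    have hGe : G = F ∘ e := by
      funext x
      simp [hGdef, happ x, div_eq_mul_inv]
    have hGcont : Continuous G := by rw [hGe]; exact hFcont.comp e.continuous
    have hGsupp : HasCompactSupport G := by rw [hGe]; exact hFsupp.comp_homeomorph e
    have hGint : Integrable G := hGcont.integrable_of_hasCompactSupport hGsupp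
    -- Step A : scaling in the second variable
    have stepA : (∫ ξ, F ξ) = (γ⁻¹ : ℝ) • ∫ x, G x := by
      have hGint' : Integrable G ((volume : Measure ℝ).prod volume) := by
        rwa [← Measure.volume_eq_prod]
      have hFint' : Integrable F ((volume : Measure ℝ).prod volume) := by
        rwa [← Measure.volume_eq_prod]
      have h1 : (∫ x, G x) = ∫ x : ℝ, ∫ y : ℝ, G (x, y) := by
        rw [Measure.volume_eq_prod, integral_prod _ hGint']
      have h2 : ∀ x : ℝ, (∫ y : ℝ, G (x, y)) = |γ| • ∫ y : ℝ, F (x, y) := by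
        intro x
        simpa using Measure.integral_comp_div (fun y => F (x, y)) γ
      have h3 : (∫ x, G x) = |γ| • ∫ ξ, F ξ := by
        rw [h1]
        simp_rw [h2]
        rw [integral_smul, Measure.volume_eq_prod, integral_prod _ hFint']
      rw [h3, smul_smul, abs_of_pos hγ, inv_mul_cancel₀ hγ.ne', one_smul]
    -- Step B : polar coordinates
    have stepB : (∫ x, G x)
        = ∫ p in polarCoord.target, p.1 • G (polarCoord.symm p) :=
      (integral_comp_polarCoord_symm G).symm
    -- Step C : identify the integrand on the target
    set H : ℝ × ℝ → ℂ := fun p =>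
      Complex.exp (Complex.I * ((lam * g p.1 : ℝ) : ℂ)) * f₀ p with hHdef
    have hCeq : ∀ p ∈ polarCoord.target, p.1 • G (polarCoord.symm p) = H p := by
      intro p hp
      rw [htarget] at hp
      obtain ⟨hp1, hp2⟩ := hp
      have hp1' : (0:ℝ) < p.1 := hp1
      have hnval : nγ (p.1 * Real.cos p.2, p.1 * Real.sin p.2 / γ) = p.1 := by
        rw [hnγ]
        have hsq : ((p.1 * Real.cos p.2) ^ 2 + γ ^ 2 * (p.1 * Real.sin p.2 / γ) ^ 2)
            = p.1 ^ 2 := by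
          have hs := Real.sin_sq_add_cos_sq p.2
          field_simp
          nlinarith [hs]
        simp only
        rw [hsq, Real.sqrt_sq hp1'.le]
      have hωval : ω (p.1 * Real.cos p.2, p.1 * Real.sin p.2 / γ) = g p.1 := by
        rw [hω, hnval, hgdef]
      simp only [hHdef, hf₀def, hu'def, hGdef, hFdef, hsymm p]
      rw [hωval]
      rw [Complex.real_smul, Complex.real_smul]
      ring
    have stepC : (∫ p in polarCoord.target, p.1 • G (polarCoord.symm p))
        = ∫ p in polarCoord.target, H p :=
      setIntegral_congr_fun htargetmeas fun p hp => hCeq p hp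
    -- integrability of H on the product measure
    have hHprod : Integrable H
        ((volume.restrict (Ioi (0:ℝ))).prod (volume.restrict (Ioo (-π) π))) := by
      rw [hHdef]
      refine hf₀prod.bdd_mul (c := 1) ?_ (Eventually.of_forall fun p => ?_)
      · exact (Complex.continuous_exp.comp (continuous_const.mul
          (Complex.continuous_ofReal.comp
            (continuous_const.mul (hgcont.comp continuous_fst))))).aestronglyMeasurable
      · rw [mul_comm Complex.I _, Complex.norm_exp_ofReal_mul_I]
    -- Step D : Fubini
    have stepD : (∫ p in polarCoord.target, H p)
        = ∫ r in Ioi (0:ℝ), Complex.exp (Complex.I * ((lam * g r : ℝ) : ℂ)) * v r := by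
      have hmeas : (∫ p in polarCoord.target, H p)
          = ∫ p, H p ∂((volume.restrict (Ioi (0:ℝ))).prod (volume.restrict (Ioo (-π) π))) := by
        rw [htarget, ← hres]
      rw [hmeas, integral_prod _ hHprod]
      refine setIntegral_congr_fun measurableSet_Ioi fun r _ => ?_
      simp only [hHdef, hvdef]
      rw [integral_const_mul]
    calc (∫ ξ : ℝ × ℝ, Complex.exp (Complex.I * ((lam * ω ξ : ℝ) : ℂ)) * u ξ)
        = ∫ ξ, F ξ := by rw [hFdef]
      _ = (γ⁻¹ : ℝ) • ∫ x, G x := stepA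
      _ = (γ⁻¹ : ℝ) • ∫ p in polarCoord.target, p.1 • G (polarCoord.symm p) := by rw [stepB]
      _ = (γ⁻¹ : ℝ) • ∫ p in polarCoord.target, H p := by rw [stepC]
      _ = (γ⁻¹ : ℝ) • ∫ r in Ioi (0:ℝ),
            Complex.exp (Complex.I * ((lam * g r : ℝ) : ℂ)) * v r := by rw [stepD]
  -- conclusion
  have key := rl_phase g g' hgderiv hg'pos hginj v hvint
  have key2 : Tendsto (fun lam : ℝ => (γ⁻¹ : ℝ) • ∫ r in Ioi (0:ℝ),
      Complex.exp (Complex.I * ((lam * g r : ℝ) : ℂ)) * v r) atTop (nhds 0) := by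
    have := key.const_smul (γ⁻¹ : ℝ)
    rwa [smul_zero] at this
  have hlam : Tendsto (fun ε : ℝ => t / ε) (nhdsWithin 0 (Set.Ioi 0)) atTop := by
    simp only [div_eq_mul_inv]
    exact tendsto_inv_nhdsGT_zero.const_mul_atTop ht
  have final := key2.comp hlam
  refine final.congr fun ε => ?_
  exact (main (t / ε)).symm
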